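/- The polynomial Σ_{π ∈ S_d} t^{c(π)} is independent of the labeling of G: if σ is any permutation of [d] and G^σ is the graph in which σ(u) and σ(v) are adjacent exactly when u and v are adjacent in G, then for every integer j the number of permutations π of [d] with c_{G^σ}(π) = j equals the number of permutations π with c_G(π) = j. -/

import Mathlib

/-- `ellSpec G a k p` says that there are positions `i₁ < i₂ < ⋯ < i_p < i_{p+1} = k`
such that `a_{i_j}` and `a_{i_{j+1}}` are adjacent in `G` for all `j`. -/
def ellSpec {d : ℕ} (G : SimpleGraph (Fin d)) (a : Equiv.Perm (Fin d)) (k : Fin d)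
    (p : ℕ) : Prop :=
  ∃ c : Fin (p + 1) → Fin d, StrictMono c ∧ c (Fin.last p) = k ∧
    ∀ j : Fin p, G.Adj (a (c j.castSucc)) (a (c j.succ))

/-- `ell G a k` is the largest `p` such that `ellSpec G a k p` holds: the length of the
longest increasing path in `a` ending at position `k`. -/
noncomputable def ell {d : ℕ} (G : SimpleGraph (Fin d)) (a : Equiv.Perm (Fin d))
    (k : Fin d) : ℕ :=
  sSup {p | ellSpec G a k p}

/-- `j` is a cut of `a` (with respect to `G`): either `j` is the first position, or
comparing with the preceding position `i` we have `ℓ(i) < ℓ(j)`, or `ℓ(i) = ℓ(j)` and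
`a_i < a_j`.  (Cuts are located at the first position of each block; this is the
0-indexed version of the paper's cuts `k ∈ [0, d-1]`.) -/
noncomputable def IsCut {d : ℕ} (G : SimpleGraph (Fin d)) (a : Equiv.Perm (Fin d))
    (j : Fin d) : Prop :=
  (j : ℕ) = 0 ∨ ∃ i : Fin d, (i : ℕ) + 1 = (j : ℕ) ∧
    (ell G a i < ell G a j ∨ (ell G a i = ell G a j ∧ a i < a j))

/-- `c(π)`: the number of cuts of the permutation `a` with respect to `G`. -/
noncomputable def numCuts {d : ℕ} (G : SimpleGraph (Fin d))
    (a : Equiv.Perm (Fin d)) : ℕ :=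
  Nat.card {j : Fin d // IsCut G a j}

/-- `χ_G(n)`: the number of proper colorings of `G` with color set `{1, …, n}`. -/
noncomputable def chromVal {d : ℕ} (G : SimpleGraph (Fin d)) (n : ℕ) : ℕ :=
  Nat.card {φ : Fin d → Fin n // ∀ u v : Fin d, G.Adj u v → φ u ≠ φ v}

section Aux

variable {d : ℕ}

private lemma ellSpec_congr {G H : SimpleGraph (Fin d)} {a b : Equiv.Perm (Fin d)}
    (h : ∀ i j : Fin d, G.Adj (a i) (a j) ↔ H.Adj (b i) (b j)) (k : Fin d) (p : ℕ) :
    ellSpec G a k p ↔ ellSpec H b k p := by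
  constructor
  · rintro ⟨c, h1, h2, h3⟩
    exact ⟨c, h1, h2, fun t => (h _ _).mp (h3 t)⟩
  · rintro ⟨c, h1, h2, h3⟩
    exact ⟨c, h1, h2, fun t => (h _ _).mpr (h3 t)⟩

private lemma ell_congr {G H : SimpleGraph (Fin d)} {a b : Equiv.Perm (Fin d)}
    (h : ∀ i j : Fin d, G.Adj (a i) (a j) ↔ H.Adj (b i) (b j)) (k : Fin d) :
    ell G a k = ell H b k := by
  unfold ell
  congr 1
  ext p
  exact ellSpec_congr h k p

private lemma ellSpec_zero (G : SimpleGraph (Fin d)) (a : Equiv.Perm (Fin d)) (k : Fin d) :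
    ellSpec G a k 0 := by
  refine ⟨fun _ => k, ?_, rfl, fun t => t.elim0⟩
  intro i j hij
  have h1 := i.isLt
  have h2 := j.isLt
  rw [Fin.lt_iff_val_lt_val] at hij
  exact absurd hij (by omega)

private lemma bddAbove_ellSpec (G : SimpleGraph (Fin d)) (a : Equiv.Perm (Fin d)) (k : Fin d) :
    BddAbove {p | ellSpec G a k p} := by
  refine ⟨d, fun p hp => ?_⟩
  obtain ⟨c, hc, -, -⟩ := hp
  have := Fintype.card_le_of_injective c hc.injective
  simp only [Fintype.card_fin] at this
  omega

private lemma ellSpec_ell (G : SimpleGraph (Fin d)) (a : Equiv.Perm (Fin d)) (k : Fin d) :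
    ellSpec G a k (ell G a k) := by
  have h0 : 0 ∈ {p | ellSpec G a k p} := ellSpec_zero G a k
  have := Nat.sSup_mem ⟨0, h0⟩ (bddAbove_ellSpec G a k)
  exact this

private lemma le_ell {G : SimpleGraph (Fin d)} {a : Equiv.Perm (Fin d)} {k : Fin d} {p : ℕ}
    (h : ellSpec G a k p) : p ≤ ell G a k := by
  have hm : p ∈ {q | ellSpec G a k q} := h
  exact le_csSup (bddAbove_ellSpec G a k) hm

private lemma ell_lt_of_adj {G : SimpleGraph (Fin d)} {a : Equiv.Perm (Fin d)} {i j : Fin d}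
    (hij : i < j) (hadj : G.Adj (a i) (a j)) : ell G a i < ell G a j := by
  obtain ⟨c, hmono, hlast, hadjc⟩ := ellSpec_ell G a i
  have hspec : ellSpec G a j (ell G a i + 1) := by
    refine ⟨Fin.snoc c j, ?_, ?_, ?_⟩
    · intro s t hst
      rcases Fin.eq_castSucc_or_eq_last t with ⟨t', rfl⟩ | rfl
      · rcases Fin.eq_castSucc_or_eq_last s with ⟨s', rfl⟩ | rfl
        · rw [Fin.snoc_castSucc, Fin.snoc_castSucc]
          exact hmono (by exact_mod_cast hst)
        · exact absurd (hst.trans (Fin.castSucc_lt_last t')) (lt_irrefl _)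
      · rcases Fin.eq_castSucc_or_eq_last s with ⟨s', rfl⟩ | rfl
        · rw [Fin.snoc_castSucc, Fin.snoc_last]
          calc c s' ≤ c (Fin.last (ell G a i)) := hmono.monotone (Fin.le_last s')
            _ = i := hlast
            _ < j := hij
        · exact absurd hst (lt_irrefl _)
    · simp
    · intro t
      rcases Fin.eq_castSucc_or_eq_last t with ⟨t', rfl⟩ | rfl
      · rw [Fin.succ_castSucc, Fin.snoc_castSucc, Fin.snoc_castSucc]
        exact hadjc t'
      · rw [Fin.succ_last, Fin.snoc_last, Fin.snoc_castSucc, hlast]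
        exact hadj
  exact lt_of_lt_of_le (Nat.lt_succ_self (ell G a i)) (le_ell hspec)


private lemma swap_lt_of_lt {i₀ i₁ x y : Fin d} (h01 : (i₀ : ℕ) + 1 = (i₁ : ℕ))
    (hxy : x < y) (hk : ¬(x = i₀ ∧ y = i₁)) :
    Equiv.swap i₀ i₁ x < Equiv.swap i₀ i₁ y := by
  have hv : (x : ℕ) < (y : ℕ) := hxy
  rcases eq_or_ne x i₀ with rfl | hx0
  · have hy1 : y ≠ i₁ := fun h => hk ⟨rfl, h⟩
    have hy0 : y ≠ x := fun h => absurd (h ▸ hxy) (lt_irrefl _)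
    have hy1' : (y : ℕ) ≠ (i₁ : ℕ) := fun h => hy1 (Fin.ext h)
    rw [Equiv.swap_apply_left, Equiv.swap_apply_of_ne_of_ne hy0 hy1,
      Fin.lt_iff_val_lt_val]
    omega
  rcases eq_or_ne x i₁ with rfl | hx1
  · have hy0 : (x : ℕ) < (y : ℕ) := hv
    have hy0' : y ≠ i₀ := by
      intro h
      have : (y : ℕ) = (i₀ : ℕ) := by rw [h]
      omega
    have hy1 : y ≠ x := fun h => absurd (h ▸ hxy) (lt_irrefl _)
    rw [Equiv.swap_apply_right, Equiv.swap_apply_of_ne_of_ne hy0' hy1,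
      Fin.lt_iff_val_lt_val]
    have hi0 : (i₀ : ℕ) < (x : ℕ) := by omega
    omega
  · rw [Equiv.swap_apply_of_ne_of_ne hx0 hx1]
    have hx0' : (x : ℕ) ≠ (i₀ : ℕ) := fun h => hx0 (Fin.ext h)
    have hx1' : (x : ℕ) ≠ (i₁ : ℕ) := fun h => hx1 (Fin.ext h)
    rcases eq_or_ne y i₀ with rfl | hy0
    · rw [Equiv.swap_apply_left, Fin.lt_iff_val_lt_val]
      omega
    rcases eq_or_ne y i₁ with rfl | hy1
    · rw [Equiv.swap_apply_right, Fin.lt_iff_val_lt_val]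
      omega
    · rw [Equiv.swap_apply_of_ne_of_ne hy0 hy1, Fin.lt_iff_val_lt_val]
      omega

private lemma ellSpec_swap_pos {G : SimpleGraph (Fin d)} {a : Equiv.Perm (Fin d)} {i₀ i₁ : Fin d}
    (h01 : (i₀ : ℕ) + 1 = (i₁ : ℕ)) (hna : ¬ G.Adj (a i₀) (a i₁)) {k : Fin d} {p : ℕ}
    (h : ellSpec G (a * Equiv.swap i₀ i₁) k p) : ellSpec G a (Equiv.swap i₀ i₁ k) p := by
  obtain ⟨c, hmono, hlast, hadj⟩ := h
  have key : ∀ s t : Fin (p + 1), s < t → ¬(c s = i₀ ∧ c t = i₁) := by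
    intro s t hst hc
    obtain ⟨hs, ht⟩ := hc
    have hst' : (s : ℕ) < (t : ℕ) := hst
    have hval : (t : ℕ) = (s : ℕ) + 1 := by
      by_contra hne
      have hlt : (s : ℕ) + 1 < (t : ℕ) := by omega
      have hsl : (s : ℕ) + 1 < p + 1 := by have := t.isLt; omega
      have hm1 : s < (⟨(s : ℕ) + 1, hsl⟩ : Fin (p + 1)) := by
        rw [Fin.lt_iff_val_lt_val]; simp
      have hm2 : (⟨(s : ℕ) + 1, hsl⟩ : Fin (p + 1)) < t := by
        rw [Fin.lt_iff_val_lt_val]; simpa using hlt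
      have h1 := hmono hm1
      have h2 := hmono hm2
      rw [hs] at h1
      rw [ht] at h2
      rw [Fin.lt_iff_val_lt_val] at h1 h2
      omega
    have hsp : (s : ℕ) < p := by have := t.isLt; omega
    have hstep := hadj ⟨(s : ℕ), hsp⟩
    have e1 : (⟨(s : ℕ), hsp⟩ : Fin p).castSucc = s := by
      apply Fin.ext; simp
    have e2 : (⟨(s : ℕ), hsp⟩ : Fin p).succ = t := by
      apply Fin.ext; simp only [Fin.val_succ]; omega
    rw [e1, e2, hs, ht] at hstep
    simp only [Equiv.Perm.mul_apply, Equiv.swap_apply_left, Equiv.swap_apply_right] at hstep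
    exact hna hstep.symm
  refine ⟨fun t => Equiv.swap i₀ i₁ (c t), ?_, ?_, ?_⟩
  case refine_2 =>
    show Equiv.swap i₀ i₁ (c (Fin.last p)) = Equiv.swap i₀ i₁ k
    rw [hlast]
  · intro s t hst
    exact swap_lt_of_lt h01 (hmono hst) (key s t hst)
  · intro t
    have := hadj t
    simpa only [Equiv.Perm.mul_apply] using this

private lemma ellSpec_swap_iff {G : SimpleGraph (Fin d)} {a : Equiv.Perm (Fin d)} {i₀ i₁ : Fin d}
    (h01 : (i₀ : ℕ) + 1 = (i₁ : ℕ)) (hna : ¬ G.Adj (a i₀) (a i₁)) {k : Fin d} {p : ℕ} :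
    ellSpec G (a * Equiv.swap i₀ i₁) k p ↔ ellSpec G a (Equiv.swap i₀ i₁ k) p := by
  constructor
  · exact ellSpec_swap_pos h01 hna
  · intro h
    have hb : (a * Equiv.swap i₀ i₁) * Equiv.swap i₀ i₁ = a := by
      rw [mul_assoc, Equiv.swap_mul_self, mul_one]
    have hna' : ¬ G.Adj ((a * Equiv.swap i₀ i₁) i₀) ((a * Equiv.swap i₀ i₁) i₁) := by
      simp only [Equiv.Perm.mul_apply, Equiv.swap_apply_left, Equiv.swap_apply_right]
      exact fun hadj => hna hadj.symm
    have h2 : ellSpec G ((a * Equiv.swap i₀ i₁) * Equiv.swap i₀ i₁) (Equiv.swap i₀ i₁ k) p := by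
      rwa [hb]
    have := ellSpec_swap_pos h01 hna' h2
    rwa [Equiv.swap_apply_self] at this

private lemma ell_mul_swap {G : SimpleGraph (Fin d)} {a : Equiv.Perm (Fin d)} {i₀ i₁ : Fin d}
    (h01 : (i₀ : ℕ) + 1 = (i₁ : ℕ)) (hna : ¬ G.Adj (a i₀) (a i₁)) (k : Fin d) :
    ell G (a * Equiv.swap i₀ i₁) k = ell G a (Equiv.swap i₀ i₁ k) := by
  unfold ell
  congr 1
  ext p
  exact ellSpec_swap_iff h01 hna

/-- `Bad G m m' a` : the values `m, m'` occupy consecutive positions of `a` and the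
`ell` statistic ties there. -/
private def Bad (G : SimpleGraph (Fin d)) (m m' : Fin d) (a : Equiv.Perm (Fin d)) : Prop :=
  ∃ i₀ i₁ : Fin d, (i₀ : ℕ) + 1 = (i₁ : ℕ) ∧
    ((a i₀ = m ∧ a i₁ = m') ∨ (a i₀ = m' ∧ a i₁ = m)) ∧ ell G a i₀ = ell G a i₁

private lemma ell_smul (G H : SimpleGraph (Fin d)) (σ : Equiv.Perm (Fin d))
    (hH : ∀ u v, H.Adj (σ u) (σ v) ↔ G.Adj u v) (π : Equiv.Perm (Fin d)) (k : Fin d) :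
    ell H (σ * π) k = ell G π k := by
  refine ell_congr (fun i j => ?_) k
  simp only [Equiv.Perm.mul_apply]
  exact hH (π i) (π j)

private lemma ell_eq_of_bad {G H : SimpleGraph (Fin d)} {m m' : Fin d}
    (hH : ∀ u v, H.Adj (Equiv.swap m m' u) (Equiv.swap m m' v) ↔ G.Adj u v)
    {π : Equiv.Perm (Fin d)} (hbad : Bad G m m' π) (k : Fin d) :
    ell H π k = ell G π k := by
  obtain ⟨i₀, i₁, h01, hval, htie⟩ := hbad
  have hi01 : i₀ < i₁ := by rw [Fin.lt_iff_val_lt_val]; omega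
  have hna : ¬ G.Adj (π i₀) (π i₁) := fun hadj =>
    absurd htie (Nat.ne_of_lt (ell_lt_of_adj hi01 hadj))
  have hswap : Equiv.swap m m' = Equiv.swap (π i₀) (π i₁) := by
    rcases hval with ⟨h1, h2⟩ | ⟨h1, h2⟩
    · rw [h1, h2]
    · rw [h1, h2, Equiv.swap_comm]
  have hcomm : Equiv.swap m m' * π = π * Equiv.swap i₀ i₁ := by
    rw [hswap]
    exact (Equiv.mul_swap_eq_swap_mul π i₀ i₁).symm
  have h1 : ell H π k = ell G (Equiv.swap m m' * π) k := by
    refine ell_congr (fun i j => ?_) k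
    have := hH (Equiv.swap m m' (π i)) (Equiv.swap m m' (π j))
    simp only [Equiv.swap_apply_self] at this
    simp only [Equiv.Perm.mul_apply]
    exact this
  rw [h1, hcomm, ell_mul_swap h01 hna]
  rcases eq_or_ne k i₀ with rfl | hk0
  · rw [Equiv.swap_apply_left]; exact htie.symm
  rcases eq_or_ne k i₁ with rfl | hk1
  · rw [Equiv.swap_apply_right]; exact htie
  · rw [Equiv.swap_apply_of_ne_of_ne hk0 hk1]

private lemma bad_of_bad {G H : SimpleGraph (Fin d)} {m m' : Fin d}
    (hH : ∀ u v, H.Adj (Equiv.swap m m' u) (Equiv.swap m m' v) ↔ G.Adj u v)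
    {π : Equiv.Perm (Fin d)} (hb : Bad G m m' π) : Bad H m m' π := by
  obtain ⟨i₀, i₁, h01, hval, htie⟩ := hb
  exact ⟨i₀, i₁, h01, hval, by
    rw [ell_eq_of_bad hH ⟨i₀, i₁, h01, hval, htie⟩, ell_eq_of_bad hH ⟨i₀, i₁, h01, hval, htie⟩]
    exact htie⟩

private lemma bad_smul_iff {G H : SimpleGraph (Fin d)} {m m' : Fin d}
    (hH : ∀ u v, H.Adj (Equiv.swap m m' u) (Equiv.swap m m' v) ↔ G.Adj u v)
    (π : Equiv.Perm (Fin d)) :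
    Bad H m m' (Equiv.swap m m' * π) ↔ Bad G m m' π := by
  have he : ∀ k, ell H (Equiv.swap m m' * π) k = ell G π k := ell_smul G H _ hH π
  have hvm : ∀ x : Fin d, (Equiv.swap m m' * π) x = m ↔ π x = m' := by
    intro x
    rw [Equiv.Perm.mul_apply]
    constructor
    · intro h
      have := congrArg (Equiv.swap m m') h
      rwa [Equiv.swap_apply_self, Equiv.swap_apply_left] at this
    · intro h
      rw [h, Equiv.swap_apply_right]
  have hvm' : ∀ x : Fin d, (Equiv.swap m m' * π) x = m' ↔ π x = m := by
    intro x
    rw [Equiv.Perm.mul_apply]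
    constructor
    · intro h
      have := congrArg (Equiv.swap m m') h
      rwa [Equiv.swap_apply_self, Equiv.swap_apply_right] at this
    · intro h
      rw [h, Equiv.swap_apply_left]
  constructor
  · rintro ⟨i₀, i₁, h01, hval, htie⟩
    refine ⟨i₀, i₁, h01, ?_, by rw [← he i₀, ← he i₁]; exact htie⟩
    rcases hval with ⟨h1, h2⟩ | ⟨h1, h2⟩
    · exact Or.inr ⟨(hvm _).mp h1, (hvm' _).mp h2⟩
    · exact Or.inl ⟨(hvm' _).mp h1, (hvm _).mp h2⟩
  · rintro ⟨i₀, i₁, h01, hval, htie⟩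
    refine ⟨i₀, i₁, h01, ?_, by rw [he i₀, he i₁]; exact htie⟩
    rcases hval with ⟨h1, h2⟩ | ⟨h1, h2⟩
    · exact Or.inr ⟨(hvm' _).mpr h1, (hvm _).mpr h2⟩
    · exact Or.inl ⟨(hvm _).mpr h1, (hvm' _).mpr h2⟩

private lemma swap_lt_swap_iff {m m' : Fin d} (hm : (m : ℕ) + 1 = (m' : ℕ)) {u v : Fin d}
    (h : ¬((u = m ∧ v = m') ∨ (u = m' ∧ v = m))) :
    Equiv.swap m m' u < Equiv.swap m m' v ↔ u < v := by
  constructor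
  · intro hlt
    have hside : ¬(Equiv.swap m m' u = m ∧ Equiv.swap m m' v = m') := by
      rintro ⟨h1, h2⟩
      apply h
      right
      constructor
      · have := congrArg (Equiv.swap m m') h1
        rwa [Equiv.swap_apply_self, Equiv.swap_apply_left] at this
      · have := congrArg (Equiv.swap m m') h2
        rwa [Equiv.swap_apply_self, Equiv.swap_apply_right] at this
    have := swap_lt_of_lt hm hlt hside
    rwa [Equiv.swap_apply_self, Equiv.swap_apply_self] at this
  · intro hlt
    exact swap_lt_of_lt hm hlt fun hc => h (Or.inl hc)

open Classical in
/-- The relabeling bijection on permutations. -/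
private noncomputable def FMap (G : SimpleGraph (Fin d)) (m m' : Fin d)
    (π : Equiv.Perm (Fin d)) : Equiv.Perm (Fin d) :=
  if Bad G m m' π then π else Equiv.swap m m' * π

private lemma numCuts_eq_of_isCut_iff {G H : SimpleGraph (Fin d)} {a b : Equiv.Perm (Fin d)}
    (h : ∀ j, IsCut H b j ↔ IsCut G a j) : numCuts H b = numCuts G a :=
  Nat.card_congr (Equiv.subtypeEquivRight h)

private lemma numCuts_FMap (G H : SimpleGraph (Fin d)) (m m' : Fin d)
    (hm : (m : ℕ) + 1 = (m' : ℕ))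
    (hH : ∀ u v, H.Adj (Equiv.swap m m' u) (Equiv.swap m m' v) ↔ G.Adj u v)
    (π : Equiv.Perm (Fin d)) :
    numCuts H (FMap G m m' π) = numCuts G π := by
  classical
  by_cases hb : Bad G m m' π
  · have hF : FMap G m m' π = π := if_pos hb
    rw [hF]
    apply numCuts_eq_of_isCut_iff
    intro j
    unfold IsCut
    have he := fun k => ell_eq_of_bad hH hb k
    simp only [he]
  · have hF : FMap G m m' π = Equiv.swap m m' * π := if_neg hb
    rw [hF]
    apply numCuts_eq_of_isCut_iff
    intro j
    unfold IsCut
    have he := fun k => ell_smul G H _ hH π k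
    simp only [he, Equiv.Perm.mul_apply]
    constructor
    · rintro (h0 | ⟨i, hij, hcase⟩)
      · exact Or.inl h0
      · refine Or.inr ⟨i, hij, ?_⟩
        rcases hcase with hlt | ⟨heq, hlt⟩
        · exact Or.inl hlt
        · refine Or.inr ⟨heq, ?_⟩
          have hside : ¬((π i = m ∧ π j = m') ∨ (π i = m' ∧ π j = m)) := by
            intro hc
            exact hb ⟨i, j, hij, hc, heq⟩
          exact (swap_lt_swap_iff hm hside).mp hlt
    · rintro (h0 | ⟨i, hij, hcase⟩)
      · exact Or.inl h0
      · refine Or.inr ⟨i, hij, ?_⟩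
        rcases hcase with hlt | ⟨heq, hlt⟩
        · exact Or.inl hlt
        · refine Or.inr ⟨heq, ?_⟩
          have hside : ¬((π i = m ∧ π j = m') ∨ (π i = m' ∧ π j = m)) := by
            intro hc
            exact hb ⟨i, j, hij, hc, heq⟩
          exact (swap_lt_swap_iff hm hside).mpr hlt

private lemma FMap_FMap (G H : SimpleGraph (Fin d)) (m m' : Fin d)
    (hH : ∀ u v, H.Adj (Equiv.swap m m' u) (Equiv.swap m m' v) ↔ G.Adj u v)
    (π : Equiv.Perm (Fin d)) :
    FMap H m m' (FMap G m m' π) = π := by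
  classical
  by_cases hb : Bad G m m' π
  · have hF : FMap G m m' π = π := if_pos hb
    have hF2 : FMap H m m' π = π := if_pos (bad_of_bad hH hb)
    rw [hF, hF2]
  · have hF : FMap G m m' π = Equiv.swap m m' * π := if_neg hb
    have hb2 : ¬ Bad H m m' (Equiv.swap m m' * π) := by
      rw [bad_smul_iff hH]
      exact hb
    have hF2 : FMap H m m' (Equiv.swap m m' * π) = Equiv.swap m m' * (Equiv.swap m m' * π) :=
      if_neg hb2
    rw [hF, hF2, ← mul_assoc, Equiv.swap_mul_self, one_mul]

private lemma card_adjswap (G H : SimpleGraph (Fin d)) (m m' : Fin d)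
    (hm : (m : ℕ) + 1 = (m' : ℕ))
    (hH : ∀ u v, H.Adj (Equiv.swap m m' u) (Equiv.swap m m' v) ↔ G.Adj u v) (j : ℕ) :
    Nat.card {π : Equiv.Perm (Fin d) // numCuts H π = j} =
      Nat.card {π : Equiv.Perm (Fin d) // numCuts G π = j} := by
  have hH' : ∀ u v, G.Adj (Equiv.swap m m' u) (Equiv.swap m m' v) ↔ H.Adj u v := by
    intro u v
    have := hH (Equiv.swap m m' u) (Equiv.swap m m' v)
    rw [Equiv.swap_apply_self, Equiv.swap_apply_self] at this
    exact this.symm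
  refine Nat.card_congr
    ⟨fun x => ⟨FMap H m m' x.1, by rw [numCuts_FMap H G m m' hm hH']; exact x.2⟩,
     fun x => ⟨FMap G m m' x.1, by rw [numCuts_FMap G H m m' hm hH]; exact x.2⟩,
     fun x => Subtype.ext (FMap_FMap H G m m' hH' x.1),
     fun x => Subtype.ext (FMap_FMap G H m m' hH x.1)⟩

end Aux

/-- The cut-generating polynomial `Σ_{π ∈ S_d} t^{c(π)}` is
independent of the labeling of `G`: if `H` is the relabeling of `G` along a
permutation `σ` of the vertices (so `σ u` and `σ v` are adjacent in `H` exactly when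
`u` and `v` are adjacent in `G`), then for every `j` the number of permutations with
exactly `j` cuts is the same for `H` as for `G`. -/
theorem numCuts_distribution_relabel_invariant {d : ℕ} (hd : 1 ≤ d)
    (G H : SimpleGraph (Fin d)) (σ : Equiv.Perm (Fin d))
    (hH : ∀ u v : Fin d, H.Adj (σ u) (σ v) ↔ G.Adj u v) (j : ℕ) :
    Nat.card {π : Equiv.Perm (Fin d) // numCuts H π = j} =
      Nat.card {π : Equiv.Perm (Fin d) // numCuts G π = j} := by
  obtain ⟨n, rfl⟩ : ∃ n, d = n + 1 := ⟨d - 1, by omega⟩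
  have key : ∀ σ : Equiv.Perm (Fin (n + 1)),
      σ ∈ Submonoid.closure (Set.range fun i : Fin n => Equiv.swap i.castSucc i.succ) →
      ∀ G H : SimpleGraph (Fin (n + 1)),
        (∀ u v, H.Adj (σ u) (σ v) ↔ G.Adj u v) →
        ∀ j : ℕ, Nat.card {π : Equiv.Perm (Fin (n + 1)) // numCuts H π = j} =
          Nat.card {π : Equiv.Perm (Fin (n + 1)) // numCuts G π = j} := by
    intro σ hσ
    induction hσ using Submonoid.closure_induction with
    | mem x hx =>
      obtain ⟨i, rfl⟩ := hx
      intro G H hGH j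
      refine card_adjswap G H i.castSucc i.succ ?_ hGH j
      simp
    | one =>
      intro G H hGH j
      have hHG : H = G := by
        ext u v
        simpa using hGH u v
      rw [hHG]
    | mul x y hx hy ihx ihy =>
      intro G H hGH j
      let K : SimpleGraph (Fin (n + 1)) :=
        { Adj := fun a b => G.Adj (y⁻¹ a) (y⁻¹ b)
          symm := ⟨fun a b (hab : G.Adj (y⁻¹ a) (y⁻¹ b)) => hab.symm⟩
          loopless := ⟨fun a (hab : G.Adj (y⁻¹ a) (y⁻¹ a)) => G.loopless.irrefl _ hab⟩ }
      have hyK : ∀ u v, K.Adj (y u) (y v) ↔ G.Adj u v := by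
        intro u v
        show G.Adj (y⁻¹ (y u)) (y⁻¹ (y v)) ↔ G.Adj u v
        rw [Equiv.Perm.inv_def, Equiv.symm_apply_apply, Equiv.symm_apply_apply]
      have hxK : ∀ u v, H.Adj (x u) (x v) ↔ K.Adj u v := by
        intro u v
        have := hGH (y⁻¹ u) (y⁻¹ v)
        simp only [Equiv.Perm.mul_apply, Equiv.Perm.inv_def, Equiv.apply_symm_apply] at this
        exact this
      calc Nat.card {π : Equiv.Perm (Fin (n + 1)) // numCuts H π = j}
          = Nat.card {π : Equiv.Perm (Fin (n + 1)) // numCuts K π = j} := ihx K H hxK j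
        _ = Nat.card {π : Equiv.Perm (Fin (n + 1)) // numCuts G π = j} := ihy G K hyK j
  refine key σ ?_ G H hH j
  rw [Equiv.Perm.mclosure_swap_castSucc_succ]
  trivial
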